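/- Let q be an odd prime power and k ≥ 2 an integer. Then the clique number of H_k^q, equivalently the independence number of the directional complement of H_k^q, is at least (q² − 1)·q^{k−2}/4. -/

import Mathlib

/-- The standard bilinear form `⟨v,w⟩ = ∑ i, v i * w i` on `F^k`. -/
def bil {k : ℕ} {F : Type} [Field F] (v w : Fin k → F) : F := ∑ i, v i * w i

/-- A vector is *normal* if its first nonzero entry equals `1`. -/
def IsNormal {k : ℕ} {F : Type} [Field F] (v : Fin k → F) : Prop :=
  ∃ i : Fin k, v i = 1 ∧ ∀ j : Fin k, j < i → v j = 0

/-- The vertex set `W` of the digraph `H_k^q`. -/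
def IsHVertex {k : ℕ} {F : Type} [Field F] (p : (Fin k → F) × (Fin k → F)) : Prop :=
  IsNormal p.1 ∧ IsNormal p.2 ∧ bil p.1 p.2 ≠ 0

/-- The vertices of the digraph `H_k^q`. -/
abbrev HVtx (k : ℕ) (F : Type) [Field F] : Type :=
  {p : (Fin k → F) × (Fin k → F) // IsHVertex p}

/-- The (loopless) adjacency of `H_k^q`: there is an edge from the vertex `(v,w)` to a
distinct vertex `(v',w')` iff `⟨v,w'⟩ ≠ 0`. -/
def HAdj {k : ℕ} {F : Type} [Field F] (a b : HVtx k F) : Prop :=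
  a ≠ b ∧ bil a.val.1 b.val.2 ≠ 0

/-- The directional complement of a loopless digraph: for distinct vertices `a, b`,
`(a,b)` is an edge iff it is not an edge of the original digraph. -/
def digraphCompl {V : Type*} (G : V → V → Prop) : V → V → Prop :=
  fun a b => a ≠ b ∧ ¬ G a b
/-- The clique number of a digraph: the maximum size of a set of vertices such that
between any two distinct vertices of the set there are directed edges in both
directions. -/
noncomputable def cliqueNumber {V : Type*} (G : V → V → Prop) : ℕ :=
  sSup {n | ∃ S : Set V, (∀ a ∈ S, ∀ b ∈ S, a ≠ b → G a b ∧ G b a) ∧ Nat.card S = n}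

/-- The independence number of a digraph: the maximum size of a set of vertices with
no edge (in either direction) between any two of them. -/
noncomputable def indepNumber {V : Type*} (G : V → V → Prop) : ℕ :=
  sSup {n | ∃ S : Set V, (∀ a ∈ S, ∀ b ∈ S, ¬ G a b) ∧ Nat.card S = n}

section Aux
variable {k : ℕ} {F : Type} [Field F]

/-- The first component of the clique vertices. -/
def vvec (k : ℕ) (a : F) : Fin k → F :=
  fun i => if i.val = 0 then 1 else if i.val = 1 then a else 0

/-- The second component of the clique vertices. -/
def wvec (k : ℕ) (b : F) (c : Fin (k - 2) → F) : Fin k → F :=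
  fun i => if i.val = 0 then 1 else if i.val = 1 then b else
    if h : 2 ≤ i.val then c ⟨i.val - 2, by have := i.isLt; omega⟩ else 0

lemma bil_vvec_wvec (hk : 2 ≤ k) (a b : F) (c : Fin (k - 2) → F) :
    bil (vvec k a) (wvec k b c) = 1 + a * b := by
  have h0 : (0 : ℕ) < k := by omega
  have h1 : (1 : ℕ) < k := by omega
  have hne : (⟨0, h0⟩ : Fin k) ≠ ⟨1, h1⟩ := by simp [Fin.ext_iff]
  unfold bil
  rw [← Finset.sum_subset (Finset.subset_univ ({⟨0, h0⟩, ⟨1, h1⟩} : Finset (Fin k)))]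
  · rw [Finset.sum_pair hne]
    simp [vvec, wvec]
  · intro i _ hi
    simp only [Finset.mem_insert, Finset.mem_singleton, Fin.ext_iff] at hi
    push_neg at hi
    simp [vvec, hi.1, hi.2]

lemma isNormal_vvec (hk : 2 ≤ k) (a : F) : IsNormal (vvec k a) := by
  refine ⟨⟨0, by omega⟩, by simp [vvec], fun j hj => ?_⟩
  exact absurd hj (by simp [Fin.lt_def])

lemma isNormal_wvec (hk : 2 ≤ k) (b : F) (c : Fin (k - 2) → F) : IsNormal (wvec k b c) := by
  refine ⟨⟨0, by omega⟩, by simp [wvec], fun j hj => ?_⟩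
  exact absurd hj (by simp [Fin.lt_def])

end Aux

/-- For an odd prime power `q` and `k ≥ 2`, the clique number of `H_k^q`, equivalently
the independence number of its directional complement, is at least
`(q² - 1) q^(k-2) / 4` (stated multiplied through by `4`). -/

theorem Hkq_cliqueNumber_lowerBound (q k : ℕ) (hq : IsPrimePow q) (hodd : Odd q)
    (hk : 2 ≤ k) (F : Type) [Field F] [Fintype F] (hF : Fintype.card F = q) :
    (q ^ 2 - 1) * q ^ (k - 2) ≤ 4 * cliqueNumber (HAdj (k := k) (F := F)) ∧
    (q ^ 2 - 1) * q ^ (k - 2) ≤ 4 * indepNumber (digraphCompl (HAdj (k := k) (F := F))) := by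
  classical
  obtain ⟨m, hm0⟩ := hodd
  have hm : q = 2 * m + 1 := by omega
  -- Choose A ⊆ F \ {0} with |A| = m.
  obtain ⟨A, hAsub, hAcard⟩ := Finset.exists_subset_card_eq (s := Finset.univ.erase (0 : F)) (n := m) (by
    rw [Finset.card_erase_of_mem (Finset.mem_univ _), Finset.card_univ, hF]; omega)
  have hA0 : ∀ a ∈ A, a ≠ 0 := fun a ha => (Finset.mem_erase.mp (hAsub ha)).1
  set B : Finset F := Finset.univ \ A.image (fun a => -a⁻¹) with hBdef
  have hinj : Function.Injective (fun a : F => -a⁻¹) := fun x y h => by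
    have := neg_injective h
    exact inv_injective this
  have hBcard : B.card = m + 1 := by
    rw [hBdef, Finset.card_sdiff_of_subset (Finset.subset_univ _), Finset.card_univ, hF,
      Finset.card_image_of_injective _ hinj, hAcard]
    omega
  have key : ∀ a ∈ A, ∀ b ∈ B, (1 : F) + a * b ≠ 0 := by
    intro a ha b hb h
    have ha0 := hA0 a ha
    have hb' : b = -a⁻¹ := by
      field_simp
      linear_combination h
    have : b ∈ A.image (fun a => -a⁻¹) := Finset.mem_image.mpr ⟨a, ha, hb'.symm⟩
    rw [hBdef] at hb
    exact (Finset.mem_sdiff.mp hb).2 this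
  -- The clique map.
  let ψ : ↥A × ↥B × (Fin (k - 2) → F) → HVtx k F :=
    fun x => ⟨(vvec k x.1.val, wvec k x.2.1.val x.2.2),
      ⟨isNormal_vvec hk _, isNormal_wvec hk _ _, by
        rw [bil_vvec_wvec hk]
        exact key _ x.1.2 _ x.2.1.2⟩⟩
  have hψinj : Function.Injective ψ := by
    rintro ⟨⟨a, ha⟩, ⟨b, hb⟩, c⟩ ⟨⟨a', ha'⟩, ⟨b', hb'⟩, c'⟩ h
    simp only [ψ, Subtype.mk.injEq, Prod.mk.injEq] at h
    obtain ⟨h1, h2⟩ := Prod.ext_iff.mp (Subtype.ext_iff.mp h)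
    have haa : a = a' := by
      have := congrFun h1 ⟨1, by omega⟩
      simpa [vvec] using this
    have hbb : b = b' := by
      have := congrFun h2 ⟨1, by omega⟩
      simpa [wvec] using this
    have hcc : c = c' := by
      funext j
      have hj2 : j.val + 2 < k := by have := j.isLt; omega
      have := congrFun h2 ⟨j.val + 2, hj2⟩
      simpa [wvec] using this
    simp [haa, hbb, hcc]
  set S : Set (HVtx k F) := Set.range ψ with hSdef
  have hclique : ∀ x ∈ S, ∀ y ∈ S, x ≠ y → HAdj x y ∧ HAdj y x := by
    rintro x ⟨u, rfl⟩ y ⟨w, rfl⟩ hne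
    refine ⟨⟨hne, ?_⟩, ⟨hne.symm, ?_⟩⟩
    · show bil (vvec k u.1.val) (wvec k w.2.1.val w.2.2) ≠ 0
      rw [bil_vvec_wvec hk]
      exact key _ u.1.2 _ w.2.1.2
    · show bil (vvec k w.1.val) (wvec k u.2.1.val u.2.2) ≠ 0
      rw [bil_vvec_wvec hk]
      exact key _ w.1.2 _ u.2.1.2
  have hScard : Nat.card S = m * ((m + 1) * q ^ (k - 2)) := by
    have : Nat.card S = Nat.card (↥A × ↥B × (Fin (k - 2) → F)) :=
      Nat.card_congr (Equiv.ofInjective ψ hψinj).symm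
    rw [this, Nat.card_prod, Nat.card_prod, Nat.card_eq_finsetCard, Nat.card_eq_finsetCard,
      hAcard, hBcard, Nat.card_eq_fintype_card, Fintype.card_fun, Fintype.card_fin, hF]
  -- Bounded above.
  have hfin : Finite (HVtx k F) := by infer_instance
  have hbdd : ∀ (T : Set (HVtx k F)), Nat.card T ≤ Nat.card (HVtx k F) := by
    intro T
    rw [Nat.card_coe_set_eq]
    calc T.ncard ≤ (Set.univ : Set (HVtx k F)).ncard :=
          Set.ncard_le_ncard (Set.subset_univ _) Set.finite_univ
      _ = Nat.card (HVtx k F) := Set.ncard_univ _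
  have hbddC : BddAbove {n | ∃ S : Set (HVtx k F),
      (∀ a ∈ S, ∀ b ∈ S, a ≠ b → HAdj a b ∧ HAdj b a) ∧ Nat.card S = n} :=
    ⟨Nat.card (HVtx k F), by rintro n ⟨T, _, rfl⟩; exact hbdd T⟩
  have hbddI : BddAbove {n | ∃ S : Set (HVtx k F),
      (∀ a ∈ S, ∀ b ∈ S, ¬ digraphCompl HAdj a b) ∧ Nat.card S = n} :=
    ⟨Nat.card (HVtx k F), by rintro n ⟨T, _, rfl⟩; exact hbdd T⟩
  have hC : m * ((m + 1) * q ^ (k - 2)) ≤ cliqueNumber (HAdj (k := k) (F := F)) :=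
    le_csSup hbddC ⟨S, hclique, hScard⟩
  have hI : m * ((m + 1) * q ^ (k - 2)) ≤ indepNumber (digraphCompl (HAdj (k := k) (F := F))) := by
    refine le_csSup hbddI ⟨S, ?_, hScard⟩
    intro a ha b hb
    rintro ⟨hne, hnadj⟩
    exact hnadj (hclique a ha b hb hne).1
  have harith : (q ^ 2 - 1) * q ^ (k - 2) = 4 * (m * ((m + 1) * q ^ (k - 2))) := by
    have h1 : q ^ 2 = 4 * (m * (m + 1)) + 1 := by rw [hm]; ring
    rw [h1, Nat.add_sub_cancel]
    ring
  constructor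
  · rw [harith]; exact Nat.mul_le_mul_left 4 hC
  · rw [harith]; exact Nat.mul_le_mul_left 4 hI
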